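/- If d is a positive even integer having exactly m distinct prime factors, where m ≥ 3, then M(d) ≤ 2^{m+1} + 1. -/

import Mathlib

/-- A pair of integers `(a, b)` is multiplicatively dependent: `ab ≠ 0` and
there is a nonzero pair of integer exponents `(k₁, k₂)` with `a^k₁ * b^k₂ = 1`
(evaluated in `ℚ`). -/
def MultDepPair (a b : ℤ) : Prop :=
  a * b ≠ 0 ∧ ∃ k : ℤ × ℤ, k ≠ 0 ∧ (a : ℚ) ^ k.1 * (b : ℚ) ^ k.2 = 1

/-- `MSet d` is the set of multiplicatively dependent pairs `(a, b) ∈ ℤ²`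
with difference `b - a = d`. -/
def MSet (d : ℤ) : Set (ℤ × ℤ) :=
  {p | MultDepPair p.1 p.2 ∧ p.2 - p.1 = d}

/-- `M d` is the number of multiplicatively dependent pairs with difference `d`. -/
noncomputable def M (d : ℤ) : ℕ := (MSet d).ncard

/-- `g` is a perfect power: `g = a ^ k` with `a ≥ 2`, `k ≥ 2`. -/
def IsPerfectPow (g : ℕ) : Prop := ∃ a k : ℕ, 2 ≤ a ∧ 2 ≤ k ∧ g = a ^ k

/-- `Nplus d` is the number of primitive solutions `(g, x, y)` of `g^y + g^x = d`
with `g ≥ 2` not a perfect power and `y > x ≥ 1`. -/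
noncomputable def Nplus (d : ℕ) : ℕ :=
  {T : ℕ × ℕ × ℕ | 2 ≤ T.1 ∧ 1 ≤ T.2.1 ∧ T.2.1 < T.2.2 ∧ ¬ IsPerfectPow T.1 ∧
    T.1 ^ T.2.2 + T.1 ^ T.2.1 = d}.ncard

/-- `Nminus d` is the number of primitive solutions `(g, x, y)` of `g^y - g^x = d`
with `g ≥ 2` not a perfect power and `y > x ≥ 1`. -/
noncomputable def Nminus (d : ℕ) : ℕ :=
  {T : ℕ × ℕ × ℕ | 2 ≤ T.1 ∧ 1 ≤ T.2.1 ∧ T.2.1 < T.2.2 ∧ ¬ IsPerfectPow T.1 ∧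
    T.1 ^ T.2.2 = T.1 ^ T.2.1 + d}.ncard


lemma exists_primitive : ∀ n : ℕ, 2 ≤ n → ∃ g k : ℕ, 2 ≤ g ∧ ¬ IsPerfectPow g ∧ 1 ≤ k ∧ n = g ^ k := by
  intro n
  induction n using Nat.strong_induction_on with
  | _ n ih =>
    intro hn
    by_cases hp : IsPerfectPow n
    · obtain ⟨a, k, ha, hk, rfl⟩ := hp
      have halt : a < a ^ k := by
        calc a = a ^ 1 := (pow_one a).symm
        _ < a ^ k := Nat.pow_lt_pow_right (by omega) (by omega)
      obtain ⟨g, j, hg, hgp, hj, hgj⟩ := ih a halt ha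
      exact ⟨g, j * k, hg, hgp, Nat.one_le_iff_ne_zero.2 (Nat.mul_ne_zero (by omega) (by omega)), by rw [hgj, pow_mul]⟩
    · exact ⟨n, 1, hn, hp, le_refl 1, (pow_one n).symm⟩

lemma common_base {a b k1 k2 : ℕ} (ha : 2 ≤ a) (hb : 2 ≤ b) (hk1 : 1 ≤ k1) (hk2 : 1 ≤ k2)
    (h : a ^ k1 = b ^ k2) :
    ∃ c s t : ℕ, 2 ≤ c ∧ 1 ≤ s ∧ 1 ≤ t ∧ a = c ^ s ∧ b = c ^ t := by
  have ha0 : a ≠ 0 := by omega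
  have hb0 : b ≠ 0 := by omega
  set e := Nat.gcd k1 k2 with he
  have he0 : 0 < e := Nat.gcd_pos_of_pos_left _ (by omega)
  set u1 := k1 / e with hu1d
  set u2 := k2 / e with hu2d
  have hk1e : k1 = u1 * e := by rw [hu1d, Nat.div_mul_cancel (Nat.gcd_dvd_left _ _)]
  have hk2e : k2 = u2 * e := by rw [hu2d, Nat.div_mul_cancel (Nat.gcd_dvd_right _ _)]
  have hu1 : 1 ≤ u1 := Nat.div_pos (Nat.le_of_dvd (by omega) (Nat.gcd_dvd_left _ _)) he0
  have hu2 : 1 ≤ u2 := Nat.div_pos (Nat.le_of_dvd (by omega) (Nat.gcd_dvd_right _ _)) he0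
  have hco : Nat.Coprime u1 u2 := Nat.coprime_div_gcd_div_gcd he0
  have h2 : a ^ u1 = b ^ u2 := by
    have h3 : (a ^ u1) ^ e = (b ^ u2) ^ e := by
      rw [← pow_mul, ← pow_mul, ← hk1e, ← hk2e, h]
    exact Nat.pow_left_injective (by omega) h3
  have hfac : ∀ p : ℕ, u1 * a.factorization p = u2 * b.factorization p := by
    intro p
    have := congrArg (fun n => Nat.factorization n p) h2
    simpa [Nat.factorization_pow, mul_comm] using this
  have hdvd : ∀ p : ℕ, u2 ∣ a.factorization p := by
    intro p
    exact Nat.Coprime.dvd_of_dvd_mul_left hco.symm ⟨b.factorization p, hfac p⟩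
  set c := ∏ p ∈ a.primeFactors, p ^ (a.factorization p / u2) with hc
  have hproda : ∏ p ∈ a.primeFactors, p ^ a.factorization p = a := by
    conv_rhs => rw [← Nat.factorization_prod_pow_eq_self ha0]
    rfl
  have hprodb : ∏ p ∈ b.primeFactors, p ^ b.factorization p = b := by
    conv_rhs => rw [← Nat.factorization_prod_pow_eq_self hb0]
    rfl
  have hca : c ^ u2 = a := by
    calc c ^ u2 = ∏ p ∈ a.primeFactors, p ^ a.factorization p := by
          rw [hc, ← Finset.prod_pow]
          exact Finset.prod_congr rfl fun p _ => by
            rw [← pow_mul, Nat.div_mul_cancel (hdvd p)]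
      _ = a := hproda
  have hsub : b.primeFactors ⊆ a.primeFactors := by
    intro p hp
    rw [Nat.mem_primeFactors] at hp ⊢
    obtain ⟨hpp, hpd, _⟩ := hp
    refine ⟨hpp, ?_, ha0⟩
    have hvb : b.factorization p ≠ 0 := (Nat.Prime.factorization_pos_of_dvd hpp hb0 hpd).ne'
    apply Nat.dvd_of_factorization_pos
    intro h0
    have := hfac p
    rw [h0, mul_zero] at this
    exact hvb (by
      have := this.symm
      rcases Nat.mul_eq_zero.mp this with h' | h'
      · omega
      · exact h')
  have hterm : ∀ p ∈ a.primeFactors, (p ^ (a.factorization p / u2)) ^ u1 = p ^ b.factorization p := by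
    intro p _
    obtain ⟨w, hw⟩ := hdvd p
    have h' := hfac p
    rw [hw] at h'
    have h'' : u2 * (u1 * w) = u2 * b.factorization p := by rw [← h']; ring
    have hbw : b.factorization p = u1 * w := (Nat.eq_of_mul_eq_mul_left (by omega) h'').symm
    rw [hw, Nat.mul_div_cancel_left _ (by omega : 0 < u2), ← pow_mul, hbw, mul_comm]
  have hcb : c ^ u1 = b := by
    calc c ^ u1 = ∏ p ∈ a.primeFactors, p ^ b.factorization p := by
          rw [hc, ← Finset.prod_pow]
          exact Finset.prod_congr rfl hterm
      _ = ∏ p ∈ b.primeFactors, p ^ b.factorization p := by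
          refine (Finset.prod_subset hsub ?_).symm
          intro p _ hpb
          have : b.factorization p = 0 := by
            rw [Nat.factorization_eq_zero_iff]
            by_cases hpp : p.Prime
            · refine Or.inr (Or.inl fun hd => hpb (Nat.mem_primeFactors.2 ⟨hpp, hd, hb0⟩))
            · exact Or.inl hpp
          simp [this]
      _ = b := hprodb
  have hc2 : 2 ≤ c := by
    by_contra hlt
    push_neg at hlt
    have : c ^ u2 ≤ 1 ^ u2 := Nat.pow_le_pow_left (by omega) _
    rw [hca, one_pow] at this
    omega
  exact ⟨c, u2, u1, hc2, hu2, hu1, hca.symm, hcb.symm⟩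

lemma primitive_unique {g h x u : ℕ} (hg : 2 ≤ g) (hh : 2 ≤ h)
    (hgp : ¬ IsPerfectPow g) (hhp : ¬ IsPerfectPow h) (hx : 1 ≤ x) (hu : 1 ≤ u)
    (heq : g ^ x = h ^ u) : g = h ∧ x = u := by
  obtain ⟨c, s, t, hc, hs, ht, hgc, hhc⟩ := common_base hg hh hx hu heq
  have hs1 : s = 1 := by
    by_contra hs'
    exact hgp ⟨c, s, hc, by omega, hgc⟩
  have ht1 : t = 1 := by
    by_contra ht'
    exact hhp ⟨c, t, hc, by omega, hhc⟩
  have hgh : g = h := by rw [hgc, hhc, hs1, ht1]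
  refine ⟨hgh, ?_⟩
  rw [hgh] at heq
  exact Nat.pow_right_injective hh heq

lemma rat_pow_eq {A B : ℕ} (hA : 2 ≤ A) (hB : 2 ≤ B) {k1 k2 : ℤ}
    (hk : ¬(k1 = 0 ∧ k2 = 0)) (h : (A : ℚ) ^ k1 * (B : ℚ) ^ k2 = 1) :
    ∃ n1 n2 : ℕ, 1 ≤ n1 ∧ 1 ≤ n2 ∧ A ^ n1 = B ^ n2 := by
  have hA1 : (1 : ℚ) < (A : ℚ) := by exact_mod_cast by omega
  have hB1 : (1 : ℚ) < (B : ℚ) := by exact_mod_cast by omega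
  have hA0 : (A : ℚ) ≠ 0 := by positivity
  have hB0 : (B : ℚ) ≠ 0 := by positivity
  -- a positive-exponents contradiction helper
  have contra : ∀ k1' k2' : ℤ, 0 ≤ k1' → 0 ≤ k2' → ¬(k1' = 0 ∧ k2' = 0) →
      (A : ℚ) ^ k1' * (B : ℚ) ^ k2' ≠ 1 := by
    intro k1' k2' h1 h2 hk' heq
    have hA' : 1 ≤ (A : ℚ) ^ k1' := one_le_zpow₀ (le_of_lt hA1) h1
    have hB' : 1 ≤ (B : ℚ) ^ k2' := one_le_zpow₀ (le_of_lt hB1) h2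
    rcases (by omega : 0 < k1' ∨ 0 < k2') with hp | hp
    · have : 1 < (A : ℚ) ^ k1' := one_lt_zpow₀ hA1 hp
      nlinarith
    · have : 1 < (B : ℚ) ^ k2' := one_lt_zpow₀ hB1 hp
      nlinarith
  rcases le_or_gt 0 k1 with h1 | h1 <;> rcases le_or_gt 0 k2 with h2 | h2
  · exact absurd h (contra k1 k2 h1 h2 hk)
  · -- k1 ≥ 0, k2 < 0 : A^k1 = B^(-k2)
    have hk1pos : 0 < k1 := by
      rcases lt_or_eq_of_le h1 with h' | h'
      · exact h'
      · exfalso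
        rw [← h', zpow_zero, one_mul] at h
        have := zpow_right_injective₀ (by positivity : (0:ℚ) < B) (by linarith) (h.trans (zpow_zero _).symm)
        omega
    have heq : (A : ℚ) ^ k1 = (B : ℚ) ^ (-k2) := by
      rw [zpow_neg]
      field_simp at h ⊢
      linarith [h]
    refine ⟨k1.toNat, (-k2).toNat, by omega, by omega, ?_⟩
    have : ((A ^ k1.toNat : ℕ) : ℚ) = ((B ^ (-k2).toNat : ℕ) : ℚ) := by
      push_cast
      rw [← zpow_natCast, ← zpow_natCast, Int.toNat_of_nonneg (le_of_lt hk1pos),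
        Int.toNat_of_nonneg (by omega : (0:ℤ) ≤ -k2)]
      exact heq
    exact_mod_cast this
  · -- k1 < 0, k2 ≥ 0 : B^k2 = A^(-k1)
    have hk2pos : 0 < k2 := by
      rcases lt_or_eq_of_le h2 with h' | h'
      · exact h'
      · exfalso
        rw [← h', zpow_zero, mul_one] at h
        have := zpow_right_injective₀ (by positivity : (0:ℚ) < A) (by linarith) (h.trans (zpow_zero _).symm)
        omega
    have heq : (A : ℚ) ^ (-k1) = (B : ℚ) ^ k2 := by
      rw [zpow_neg]
      field_simp at h ⊢
      linarith [h]
    refine ⟨(-k1).toNat, k2.toNat, by omega, by omega, ?_⟩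
    have : ((A ^ (-k1).toNat : ℕ) : ℚ) = ((B ^ k2.toNat : ℕ) : ℚ) := by
      push_cast
      rw [← zpow_natCast, ← zpow_natCast, Int.toNat_of_nonneg (by omega : (0:ℤ) ≤ -k1),
        Int.toNat_of_nonneg (le_of_lt hk2pos)]
      exact heq
    exact_mod_cast this
  · -- both negative: invert
    exfalso
    have h' : (A : ℚ) ^ (-k1) * (B : ℚ) ^ (-k2) = 1 := by
      rw [zpow_neg, zpow_neg, ← mul_inv, h, inv_one]
    exact contra (-k1) (-k2) (by omega) (by omega) (by omega) h'

lemma cop_add {g k x : ℕ} (hg : 2 ≤ g) (hk : 1 ≤ k) : Nat.Coprime (g ^ x) (g ^ k + 1) := by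
  apply Nat.Coprime.pow_left
  have h1 : Nat.gcd g (g ^ k + 1) ∣ 1 := by
    have hd1 : Nat.gcd g (g ^ k + 1) ∣ g ^ k := (Nat.gcd_dvd_left _ _).trans (dvd_pow_self g (by omega))
    have hd2 : Nat.gcd g (g ^ k + 1) ∣ g ^ k + 1 := Nat.gcd_dvd_right _ _
    have := Nat.dvd_sub hd2 hd1
    simpa using this
  exact Nat.eq_one_of_dvd_one h1

lemma cop_sub {g k x : ℕ} (hg : 2 ≤ g) (hk : 1 ≤ k) : Nat.Coprime (g ^ x) (g ^ k - 1) := by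
  apply Nat.Coprime.pow_left
  have hgk : 1 ≤ g ^ k := Nat.one_le_pow _ _ (by omega)
  have h1 : Nat.gcd g (g ^ k - 1) ∣ 1 := by
    have hd1 : Nat.gcd g (g ^ k - 1) ∣ g ^ k := (Nat.gcd_dvd_left _ _).trans (dvd_pow_self g (by omega))
    have hd2 : Nat.gcd g (g ^ k - 1) ∣ g ^ k - 1 := Nat.gcd_dvd_right _ _
    have := Nat.dvd_sub hd1 hd2
    have h2 : g ^ k - (g ^ k - 1) = 1 := by omega
    rwa [h2] at this
  exact Nat.eq_one_of_dvd_one h1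

/-- a unitary divisor is determined by its set of prime factors -/
lemma unitary_eq {d e1 c1 e2 c2 : ℕ} (hd : d ≠ 0) (h1 : e1 * c1 = d) (h2 : e2 * c2 = d)
    (hco1 : Nat.Coprime e1 c1) (hco2 : Nat.Coprime e2 c2)
    (hpf : e1.primeFactors = e2.primeFactors) : e1 = e2 := by
  have he1 : e1 ≠ 0 := by rintro rfl; simp at h1; omega
  have he2 : e2 ≠ 0 := by rintro rfl; simp at h2; omega
  have hc1 : c1 ≠ 0 := by rintro rfl; simp at h1; omega
  have hc2 : c2 ≠ 0 := by rintro rfl; simp at h2; omega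
  apply Nat.factorization_inj (by simpa using he1) (by simpa using he2)
  ext p
  by_cases hp : p ∈ e1.primeFactors
  · have key : ∀ e c : ℕ, e ≠ 0 → c ≠ 0 → e * c = d → Nat.Coprime e c → p ∈ e.primeFactors →
        e.factorization p = d.factorization p := by
      intro e c he hc hec hco hpe
      have hcp : c.factorization p = 0 := by
        apply Nat.factorization_eq_zero_of_not_dvd
        intro hdvd
        have hpe' := Nat.mem_primeFactors.mp hpe
        have : p ∣ Nat.gcd e c := Nat.dvd_gcd hpe'.2.1 hdvd
        rw [hco] at this
        have h1 := Nat.eq_one_of_dvd_one this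
        have h2 := hpe'.1.two_le
        omega
      rw [← hec, Nat.factorization_mul he hc]
      simp [hcp]
    rw [key e1 c1 he1 hc1 h1 hco1 hp, key e2 c2 he2 hc2 h2 hco2 (hpf ▸ hp)]
  · have hp2 : p ∉ e2.primeFactors := hpf ▸ hp
    have z1 : e1.factorization p = 0 := by
      by_contra h
      exact hp (by simpa using Finsupp.mem_support_iff.mpr h)
    have z2 : e2.factorization p = 0 := by
      by_contra h
      exact hp2 (by simpa using Finsupp.mem_support_iff.mpr h)
    rw [z1, z2]

lemma count_bound {d m : ℕ} (hd : 0 < d) (hm : d.primeFactors.card = m) (hm3 : 3 ≤ m) :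
    Nplus d + Nminus d ≤ 2 ^ m - 2 := by
  classical
  set Pp : Set (ℕ × ℕ × ℕ) := {T : ℕ × ℕ × ℕ | 2 ≤ T.1 ∧ 1 ≤ T.2.1 ∧ T.2.1 < T.2.2 ∧
    ¬ IsPerfectPow T.1 ∧ T.1 ^ T.2.2 + T.1 ^ T.2.1 = d} with hPp
  set Pm : Set (ℕ × ℕ × ℕ) := {T : ℕ × ℕ × ℕ | 2 ≤ T.1 ∧ 1 ≤ T.2.1 ∧ T.2.1 < T.2.2 ∧
    ¬ IsPerfectPow T.1 ∧ T.1 ^ T.2.2 = T.1 ^ T.2.1 + d} with hPm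
  set F : ℕ × ℕ × ℕ → Finset ℕ := fun T => (T.1 ^ T.2.1).primeFactors with hF
  have hd0 : d ≠ 0 := hd.ne'
  have facts : ∀ T ∈ Pp ∪ Pm, 2 ≤ T.1 ∧ 1 ≤ T.2.1 ∧ T.2.1 < T.2.2 ∧ ¬ IsPerfectPow T.1 := by
    rintro T (hT | hT) <;> exact ⟨hT.1, hT.2.1, hT.2.2.1, hT.2.2.2.1⟩
  -- cofactor structure
  have struct : ∀ T ∈ Pp ∪ Pm, ∃ c : ℕ, 2 ≤ c ∧ T.1 ^ T.2.1 * c = d ∧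
      Nat.Coprime (T.1 ^ T.2.1) c := by
    rintro ⟨g, x, y⟩ (⟨hg, hx, hxy, hgp, heq⟩ | ⟨hg, hx, hxy, hgp, heq⟩) <;>
      simp only at hg hx hxy hgp heq
    · refine ⟨g ^ (y - x) + 1, ?_, ?_, cop_add hg (by omega)⟩
      · have : g ≤ g ^ (y - x) := Nat.le_self_pow (by omega) g
        omega
      · have hsplit : g ^ y = g ^ x * g ^ (y - x) := by
          rw [← pow_add]; congr 1; omega
        have : g ^ x * (g ^ (y - x) + 1) = g ^ x * g ^ (y - x) + g ^ x := by ring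
        rw [this, ← hsplit]
        omega
    · have hsplit : g ^ y = g ^ x * g ^ (y - x) := by
        rw [← pow_add]; congr 1; omega
      have hG2 : 2 ≤ g ^ (y - x) := le_trans hg (Nat.le_self_pow (by omega) g)
      obtain ⟨G', hG'⟩ : ∃ G', g ^ (y - x) = G' + 1 := ⟨g ^ (y - x) - 1, by omega⟩
      have hEG : g ^ x * G' + g ^ x = g ^ x + d := by
        have h2 : g ^ x * (G' + 1) = g ^ x + d := by rw [← hG', ← hsplit]; exact heq
        have h3 : g ^ x * (G' + 1) = g ^ x * G' + g ^ x := by ring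
        omega
      have hEGd : g ^ x * G' = d := by omega
      refine ⟨G', ?_, hEGd, by
        have := cop_sub (g := g) (k := y - x) (x := x) hg (by omega)
        rwa [hG', Nat.add_sub_cancel] at this⟩
      -- G' ≥ 2, else d = g^x is a power of 2
      by_contra hG'2
      have hG'1 : G' = 1 := by omega
      have hGe : g ^ (y - x) = 2 := by omega
      have hg2 : g = 2 := by
        have : g ∣ g ^ (y - x) := dvd_pow_self g (by omega)
        rw [hGe] at this
        have := Nat.le_of_dvd (by norm_num) this
        omega
      have hdx : d = 2 ^ x := by rw [← hEGd, hG'1, mul_one, hg2]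
      have hsub : d.primeFactors ⊆ {2} := by
        intro p hp
        rw [Nat.mem_primeFactors] at hp
        have : p ∣ 2 := hp.1.dvd_of_dvd_pow (hdx ▸ hp.2.1)
        have := (Nat.prime_dvd_prime_iff_eq hp.1 Nat.prime_two).mp this
        simp [this]
      have := Finset.card_le_card hsub
      simp at this
      omega
  -- target finset
  set Tgt : Finset (Finset ℕ) := (d.primeFactors.powerset.erase ∅).erase d.primeFactors with hTgt
  have hpfne : d.primeFactors.Nonempty := Finset.card_pos.mp (by omega)
  have hTgtcard : Tgt.card = 2 ^ m - 2 := by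
    have hmem1 : d.primeFactors ∈ d.primeFactors.powerset.erase ∅ :=
      Finset.mem_erase.mpr ⟨hpfne.ne_empty, Finset.mem_powerset_self _⟩
    have hmem2 : (∅ : Finset ℕ) ∈ d.primeFactors.powerset := Finset.empty_mem_powerset _
    rw [hTgt, Finset.card_erase_of_mem hmem1, Finset.card_erase_of_mem hmem2,
      Finset.card_powerset, hm]
    omega
  -- image in target
  have himg : ∀ T ∈ Pp ∪ Pm, F T ∈ Tgt := by
    intro T hT
    obtain ⟨c, hc2, hdc, hco⟩ := struct T hT
    obtain ⟨hg, hx, hxy, hgp⟩ := facts T hT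
    have he2 : 2 ≤ T.1 ^ T.2.1 := le_trans hg (Nat.le_self_pow (by omega) _)
    have hedvd : T.1 ^ T.2.1 ∣ d := Dvd.intro c hdc
    have hsub : (T.1 ^ T.2.1).primeFactors ⊆ d.primeFactors :=
      Nat.primeFactors_mono hedvd hd0
    have hne : (T.1 ^ T.2.1).primeFactors.Nonempty :=
      Nat.nonempty_primeFactors.mpr (by omega)
    obtain ⟨p, hp, hpc⟩ := Nat.exists_prime_and_dvd (by omega : c ≠ 1)
    have hpd : p ∈ d.primeFactors :=
      Nat.mem_primeFactors.mpr ⟨hp, hpc.trans (Dvd.intro_left _ hdc), hd0⟩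
    have hpe : p ∉ (T.1 ^ T.2.1).primeFactors := by
      intro hmem
      have hpe' := Nat.mem_primeFactors.mp hmem
      have : p ∣ Nat.gcd (T.1 ^ T.2.1) c := Nat.dvd_gcd hpe'.2.1 hpc
      rw [hco] at this
      have := Nat.eq_one_of_dvd_one this
      have := hp.two_le
      omega
    refine Finset.mem_erase.mpr ⟨?_, Finset.mem_erase.mpr ⟨hne.ne_empty, Finset.mem_powerset.mpr hsub⟩⟩
    intro hfull
    have hfull' : (T.1 ^ T.2.1).primeFactors = d.primeFactors := hfull
    exact hpe (by rw [hfull']; exact hpd)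
  -- master: equal prime sets give equal base and lower exponent
  have master : ∀ T1 ∈ Pp ∪ Pm, ∀ T2 ∈ Pp ∪ Pm, F T1 = F T2 →
      T1.1 = T2.1 ∧ T1.2.1 = T2.2.1 := by
    intro T1 h1 T2 h2 hFe
    obtain ⟨c1, hc1, hd1, hco1⟩ := struct T1 h1
    obtain ⟨c2, hc2, hd2, hco2⟩ := struct T2 h2
    obtain ⟨hg1, hx1, hxy1, hgp1⟩ := facts T1 h1
    obtain ⟨hg2, hx2, hxy2, hgp2⟩ := facts T2 h2
    have he : T1.1 ^ T1.2.1 = T2.1 ^ T2.2.1 := unitary_eq hd0 hd1 hd2 hco1 hco2 hFe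
    exact primitive_unique hg1 hg2 hgp1 hgp2 hx1 hx2 he
  -- injectivity on each piece
  have injp : Set.InjOn F Pp := by
    intro T1 h1 T2 h2 hFe
    obtain ⟨hgeq, hxeq⟩ := master T1 (Set.mem_union_left _ h1) T2 (Set.mem_union_left _ h2) hFe
    obtain ⟨g1, x1, y1⟩ := T1
    obtain ⟨g2, x2, y2⟩ := T2
    simp only at hgeq hxeq
    subst hgeq hxeq
    obtain ⟨hg, hx, hxy, hgp, heq1⟩ := h1
    obtain ⟨_, _, _, _, heq2⟩ := h2
    simp only at heq1 heq2 hg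
    have : g1 ^ y1 = g1 ^ y2 := by omega
    have := Nat.pow_right_injective hg this
    simp [this]
  have injm : Set.InjOn F Pm := by
    intro T1 h1 T2 h2 hFe
    obtain ⟨hgeq, hxeq⟩ := master T1 (Set.mem_union_right _ h1) T2 (Set.mem_union_right _ h2) hFe
    obtain ⟨g1, x1, y1⟩ := T1
    obtain ⟨g2, x2, y2⟩ := T2
    simp only at hgeq hxeq
    subst hgeq hxeq
    obtain ⟨hg, hx, hxy, hgp, heq1⟩ := h1
    obtain ⟨_, _, _, _, heq2⟩ := h2
    simp only at heq1 heq2 hg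
    have : g1 ^ y1 = g1 ^ y2 := by omega
    have := Nat.pow_right_injective hg this
    simp [this]
  -- cross case: no common value
  have cross : ∀ T1 ∈ Pp, ∀ T2 ∈ Pm, F T1 ≠ F T2 := by
    intro T1 h1 T2 h2 hFe
    obtain ⟨hgeq, hxeq⟩ := master T1 (Set.mem_union_left _ h1) T2 (Set.mem_union_right _ h2) hFe
    obtain ⟨g1, x1, y1⟩ := T1
    obtain ⟨g2, x2, y2⟩ := T2
    simp only at hgeq hxeq
    subst hgeq hxeq
    obtain ⟨hg, hx, hxy1, hgp, heq1⟩ := h1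
    obtain ⟨_, _, hxy2, _, heq2⟩ := h2
    simp only at heq1 heq2 hg hx hxy1 hxy2
    -- g1^{y2} = g1^{y1} + 2 g1^{x1}
    have hkey : g1 ^ y2 = g1 ^ y1 + 2 * g1 ^ x1 := by omega
    have hdvd1 : g1 ^ (x1 + 1) ∣ g1 ^ y1 := pow_dvd_pow g1 (by omega)
    have hdvd2 : g1 ^ (x1 + 1) ∣ g1 ^ y2 := pow_dvd_pow g1 (by omega)
    have hdvd3 : g1 ^ (x1 + 1) ∣ 2 * g1 ^ x1 := by
      have := Nat.dvd_sub hdvd2 hdvd1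
      rwa [hkey, Nat.add_sub_cancel_left] at this
    have hpow : g1 ^ (x1 + 1) = g1 ^ x1 * g1 := pow_succ g1 x1
    have hx0 : 0 < g1 ^ x1 := Nat.pow_pos (by omega)
    have hgdvd : g1 ∣ 2 := by
      rw [hpow, mul_comm 2 (g1 ^ x1)] at hdvd3
      exact (Nat.mul_dvd_mul_iff_left hx0).mp hdvd3
    have hg2 : g1 = 2 := by
      have := Nat.le_of_dvd (by norm_num) hgdvd
      omega
    subst hg2
    set u1 := y1 - (x1 + 1) with hu1
    set u2 := y2 - (x1 + 1) with hu2
    have h1' : (2:ℕ) ^ y1 = 2 ^ (x1 + 1) * 2 ^ u1 := by rw [← pow_add]; congr 1; omega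
    have h2' : (2:ℕ) ^ y2 = 2 ^ (x1 + 1) * 2 ^ u2 := by rw [← pow_add]; congr 1; omega
    have hps : (2:ℕ) ^ (x1 + 1) = 2 ^ x1 * 2 := pow_succ 2 x1
    have key2 : (2:ℕ) ^ u2 = 2 ^ u1 + 1 := by
      have hmul : (2:ℕ) ^ (x1 + 1) * 2 ^ u2 = 2 ^ (x1 + 1) * (2 ^ u1 + 1) := by
        rw [mul_add, mul_one]
        omega
      exact Nat.eq_of_mul_eq_mul_left (by positivity) hmul
    by_cases hu10 : u1 = 0
    · -- then d = 3 * 2^x1, contradicting m ≥ 3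
      rw [hu10, pow_zero] at key2
      have hu21 : u2 = 1 := by
        have : (2:ℕ) ^ u2 = 2 ^ 1 := by rw [key2]; norm_num
        exact Nat.pow_right_injective (le_refl 2) this
      have hy1 : y1 = x1 + 1 := by omega
      have hd3 : d = 3 * 2 ^ x1 := by
        rw [hy1] at heq1
        rw [hps] at heq1
        omega
      have hsub3 : d.primeFactors ⊆ {2, 3} := by
        intro p hp
        rw [Nat.mem_primeFactors] at hp
        obtain ⟨hpp, hpd, -⟩ := hp
        rw [hd3] at hpd
        rcases (Nat.Prime.dvd_mul hpp).mp hpd with h3 | h2x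
        · have : p = 3 := (Nat.prime_dvd_prime_iff_eq hpp (by norm_num)).mp h3
          simp [this]
        · have : p ∣ 2 := hpp.dvd_of_dvd_pow h2x
          have : p = 2 := (Nat.prime_dvd_prime_iff_eq hpp Nat.prime_two).mp this
          simp [this]
      have := Finset.card_le_card hsub3
      have hc23 : ({2, 3} : Finset ℕ).card ≤ 2 := by decide
      omega
    · have e1 : (2:ℕ) ∣ 2 ^ u1 := dvd_pow_self 2 hu10
      have hu20 : u2 ≠ 0 := by
        intro h0
        rw [h0, pow_zero] at key2
        have : 1 ≤ (2:ℕ) ^ u1 := Nat.one_le_two_pow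
        omega
      have e2 : (2:ℕ) ∣ 2 ^ u2 := dvd_pow_self 2 hu20
      omega
  -- assemble cardinalities
  have hfinTgt := Tgt.finite_toSet
  have hsubp : F '' Pp ⊆ ↑Tgt := by
    rintro s ⟨T, hT, rfl⟩
    exact himg T (Set.mem_union_left _ hT)
  have hsubm : F '' Pm ⊆ ↑Tgt := by
    rintro s ⟨T, hT, rfl⟩
    exact himg T (Set.mem_union_right _ hT)
  have hfinp : (F '' Pp).Finite := hfinTgt.subset hsubp
  have hfinm : (F '' Pm).Finite := hfinTgt.subset hsubm
  have hdisj : Disjoint (F '' Pp) (F '' Pm) := by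
    rw [Set.disjoint_left]
    rintro s ⟨T1, hT1, rfl⟩ ⟨T2, hT2, hFe⟩
    exact cross T1 hT1 T2 hT2 hFe.symm
  have hNp : Nplus d = (F '' Pp).ncard := by
    rw [Set.ncard_image_of_injOn injp]
    rfl
  have hNm : Nminus d = (F '' Pm).ncard := by
    rw [Set.ncard_image_of_injOn injm]
    rfl
  rw [hNp, hNm, ← Set.ncard_union_eq hdisj hfinp hfinm]
  calc (F '' Pp ∪ F '' Pm).ncard ≤ (↑Tgt : Set (Finset ℕ)).ncard := by
        apply Set.ncard_le_ncard (Set.union_subset hsubp hsubm) hfinTgt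
    _ = Tgt.card := Set.ncard_coe_finset Tgt
    _ = 2 ^ m - 2 := hTgtcard

lemma multdep_structure {a b : ℤ} (h : MultDepPair a b) (ha : 2 ≤ a.natAbs) (hb : 2 ≤ b.natAbs) :
    ∃ g x y : ℕ, 2 ≤ g ∧ ¬ IsPerfectPow g ∧ 1 ≤ x ∧ 1 ≤ y ∧
      a.natAbs = g ^ x ∧ b.natAbs = g ^ y := by
  obtain ⟨hne, k, hk0, hkeq⟩ := h
  have habsa : ((a.natAbs : ℕ) : ℚ) = |(a : ℚ)| := by
    rw [Nat.cast_natAbs]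
    push_cast
    ring
  have habsb : ((b.natAbs : ℕ) : ℚ) = |(b : ℚ)| := by
    rw [Nat.cast_natAbs]
    push_cast
    ring
  have habs : (a.natAbs : ℚ) ^ k.1 * (b.natAbs : ℚ) ^ k.2 = 1 := by
    have hz : ∀ (q : ℚ) (n : ℤ), |q ^ n| = |q| ^ n := fun q n =>
      map_zpow₀ (absHom : ℚ →*₀ ℚ) q n
    have := congrArg (fun q : ℚ => |q|) hkeq
    simp only [abs_mul, abs_one, hz] at this
    rw [habsa, habsb]
    exact this
  have hk0' : ¬(k.1 = 0 ∧ k.2 = 0) := by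
    intro ⟨h1, h2⟩
    exact hk0 (Prod.ext h1 h2)
  obtain ⟨n1, n2, hn1, hn2, heq⟩ := rat_pow_eq ha hb hk0' habs
  obtain ⟨c, s, t, hc, hs, ht, hac, hbc⟩ := common_base ha hb hn1 hn2 heq
  obtain ⟨g, j, hg, hgp, hj, hcg⟩ := exists_primitive c hc
  refine ⟨g, j * s, j * t, hg, hgp, Nat.one_le_iff_ne_zero.mpr (by positivity),
    Nat.one_le_iff_ne_zero.mpr (by positivity), ?_, ?_⟩
  · rw [hac, hcg, ← pow_mul]
  · rw [hbc, hcg, ← pow_mul]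

theorem stmt12 (d m : ℕ) (hd : 0 < d) (heven : Even d)
    (hm : d.primeFactors.card = m) (hm3 : 3 ≤ m) :
    M (d : ℤ) ≤ 2 ^ (m + 1) + 1 := by
  classical
  set Pp : Set (ℕ × ℕ × ℕ) := {T : ℕ × ℕ × ℕ | 2 ≤ T.1 ∧ 1 ≤ T.2.1 ∧ T.2.1 < T.2.2 ∧
    ¬ IsPerfectPow T.1 ∧ T.1 ^ T.2.2 + T.1 ^ T.2.1 = d} with hPp
  set Pm : Set (ℕ × ℕ × ℕ) := {T : ℕ × ℕ × ℕ | 2 ≤ T.1 ∧ 1 ≤ T.2.1 ∧ T.2.1 < T.2.2 ∧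
    ¬ IsPerfectPow T.1 ∧ T.1 ^ T.2.2 = T.1 ^ T.2.1 + d} with hPm
  -- finiteness of the solution sets
  have hIccfin : (Set.Icc ((0,0,0) : ℕ × ℕ × ℕ) (2*d, 2*d, 2*d)).Finite := Set.finite_Icc _ _
  have hPpfin : Pp.Finite := by
    apply hIccfin.subset
    rintro ⟨g, x, y⟩ ⟨hg, hx, hxy, hgp, heq⟩
    simp only at hg hx hxy heq
    have hgy : g ^ y ≤ d := by omega
    have h1 : g ≤ g ^ y := Nat.le_self_pow (by omega) g
    have h2 : y ≤ g ^ y := le_trans (Nat.lt_two_pow_self (n := y)).le (Nat.pow_le_pow_left hg y)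
    simp only [Set.mem_Icc, Prod.le_def]
    exact ⟨⟨Nat.zero_le _, Nat.zero_le _, Nat.zero_le _⟩, by omega, by omega, by omega⟩
  have hPmfin : Pm.Finite := by
    apply hIccfin.subset
    rintro ⟨g, x, y⟩ ⟨hg, hx, hxy, hgp, heq⟩
    simp only at hg hx hxy heq
    have hx1 : g ^ x * 2 ≤ g ^ x * g := Nat.mul_le_mul_left _ hg
    have hx2 : g ^ x * g ≤ g ^ y := by
      rw [← pow_succ]
      exact Nat.pow_le_pow_right (by omega) (by omega)
    have hgy : g ^ y ≤ 2 * d := by omega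
    have h1 : g ≤ g ^ y := Nat.le_self_pow (by omega) g
    have h2 : y ≤ g ^ y := le_trans (Nat.lt_two_pow_self (n := y)).le (Nat.pow_le_pow_left hg y)
    simp only [Set.mem_Icc, Prod.le_def]
    exact ⟨⟨Nat.zero_le _, Nat.zero_le _, Nat.zero_le _⟩, by omega, by omega, by omega⟩
  -- the exceptional set and the four image maps
  set A : Set (ℤ × ℤ) := {((1:ℤ), (d:ℤ)+1), ((-1:ℤ), (d:ℤ)-1), (1-(d:ℤ), (1:ℤ)),
    (-1-(d:ℤ), (-1:ℤ)), (-(((d/2 : ℕ)) : ℤ), (((d/2 : ℕ)) : ℤ))} with hA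
  set f1 : ℕ × ℕ × ℕ → ℤ × ℤ := fun T => (-((T.1 ^ T.2.1 : ℕ) : ℤ), ((T.1 ^ T.2.2 : ℕ) : ℤ)) with hf1
  set f2 : ℕ × ℕ × ℕ → ℤ × ℤ := fun T => (-((T.1 ^ T.2.2 : ℕ) : ℤ), ((T.1 ^ T.2.1 : ℕ) : ℤ)) with hf2
  set f3 : ℕ × ℕ × ℕ → ℤ × ℤ := fun T => (((T.1 ^ T.2.1 : ℕ) : ℤ), ((T.1 ^ T.2.2 : ℕ) : ℤ)) with hf3
  set f4 : ℕ × ℕ × ℕ → ℤ × ℤ := fun T => (-((T.1 ^ T.2.2 : ℕ) : ℤ), -((T.1 ^ T.2.1 : ℕ) : ℤ)) with hf4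
  -- covering
  have cover : MSet (d : ℤ) ⊆ A ∪ f1 '' Pp ∪ f2 '' Pp ∪ f3 '' Pm ∪ f4 '' Pm := by
    rintro ⟨a, b⟩ ⟨hdep, hdiff⟩
    simp only at hdiff
    have hne := hdep.1
    have ha0 : a ≠ 0 := fun h => hne (by rw [h, zero_mul])
    have hb0 : b ≠ 0 := fun h => hne (by rw [h, mul_zero])
    simp only [Set.mem_union]
    by_cases ha1 : a.natAbs = 1
    · -- a = ±1
      rcases Int.natAbs_eq_iff.mp ha1 with h | h <;> norm_num at h <;> subst h
      · refine Or.inl (Or.inl (Or.inl (Or.inl ?_)))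
        have hb' : b = (d:ℤ) + 1 := by omega
        rw [hA]
        simp only [Set.mem_insert_iff, Set.mem_singleton_iff]
        exact Or.inl (by rw [hb'])
      · refine Or.inl (Or.inl (Or.inl (Or.inl ?_)))
        have hb' : b = (d:ℤ) - 1 := by omega
        rw [hA]
        simp only [Set.mem_insert_iff, Set.mem_singleton_iff]
        exact Or.inr (Or.inl (by rw [hb']))
    by_cases hb1 : b.natAbs = 1
    · rcases Int.natAbs_eq_iff.mp hb1 with h | h <;> norm_num at h <;> subst h
      · refine Or.inl (Or.inl (Or.inl (Or.inl ?_)))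
        have ha' : a = 1 - (d:ℤ) := by omega
        rw [hA]
        simp only [Set.mem_insert_iff, Set.mem_singleton_iff]
        exact Or.inr (Or.inr (Or.inl (by rw [ha'])))
      · refine Or.inl (Or.inl (Or.inl (Or.inl ?_)))
        have ha' : a = -1 - (d:ℤ) := by omega
        rw [hA]
        simp only [Set.mem_insert_iff, Set.mem_singleton_iff]
        exact Or.inr (Or.inr (Or.inr (Or.inl (by rw [ha']))))
    -- now both |a|,|b| ≥ 2
    have ha2 : 2 ≤ a.natAbs := by
      have : a.natAbs ≠ 0 := fun h => ha0 (Int.natAbs_eq_zero.mp h)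
      omega
    have hb2 : 2 ≤ b.natAbs := by
      have : b.natAbs ≠ 0 := fun h => hb0 (Int.natAbs_eq_zero.mp h)
      omega
    obtain ⟨g, x, y, hg, hgp, hx, hy, hAa, hBb⟩ := multdep_structure hdep ha2 hb2
    have hgpow : (1:ℕ) < g := by omega
    rcases lt_trichotomy a 0 with han | haz | hap
    · rcases lt_trichotomy b 0 with hbn | hbz | hbp
      · -- a < 0, b < 0 : g^x - g^y = d, y < x
        have haeq : a = -((g ^ x : ℕ) : ℤ) := by
          have h1 : (a.natAbs : ℤ) = ((g ^ x : ℕ) : ℤ) := by exact_mod_cast hAa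
          omega
        have hbeq : b = -((g ^ y : ℕ) : ℤ) := by
          have h1 : (b.natAbs : ℤ) = ((g ^ y : ℕ) : ℤ) := by exact_mod_cast hBb
          omega
        have hnat : g ^ x = g ^ y + d := by
          have : ((g ^ x : ℕ) : ℤ) = ((g ^ y : ℕ) : ℤ) + (d : ℤ) := by omega
          exact_mod_cast this
        have hyx : y < x := by
          rw [← Nat.pow_lt_pow_iff_right hgpow]
          omega
        have hmem : (g, y, x) ∈ Pm := by
          rw [hPm]; exact ⟨hg, hy, hyx, hgp, hnat⟩
        refine Or.inr ⟨(g, y, x), hmem, ?_⟩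
        rw [haeq, hbeq]
      · exact absurd hbz hb0
      · -- a < 0 < b : g^x + g^y = d
        have haeq : a = -((g ^ x : ℕ) : ℤ) := by
          have h1 : (a.natAbs : ℤ) = ((g ^ x : ℕ) : ℤ) := by exact_mod_cast hAa
          omega
        have hbeq : b = ((g ^ y : ℕ) : ℤ) := by
          have h1 : (b.natAbs : ℤ) = ((g ^ y : ℕ) : ℤ) := by exact_mod_cast hBb
          omega
        have hnat : g ^ y + g ^ x = d := by
          have : ((g ^ y : ℕ) : ℤ) + ((g ^ x : ℕ) : ℤ) = (d : ℤ) := by omega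
          exact_mod_cast this
        rcases lt_trichotomy x y with hxy | hxy | hxy
        · have hmem : (g, x, y) ∈ Pp := by
            rw [hPp]; exact ⟨hg, hx, hxy, hgp, hnat⟩
          refine Or.inl (Or.inl (Or.inl (Or.inr ⟨(g, x, y), hmem, ?_⟩)))
          rw [haeq, hbeq]
        · -- x = y : the symmetric pair
          refine Or.inl (Or.inl (Or.inl (Or.inl ?_)))
          subst hxy
          have h2 : 2 * g ^ x = d := by omega
          have hhalf : d / 2 = g ^ x := by omega
          rw [hA]
          simp only [Set.mem_insert_iff, Set.mem_singleton_iff]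
          refine Or.inr (Or.inr (Or.inr (Or.inr ?_)))
          have : ((d/2 : ℕ) : ℤ) = ((g ^ x : ℕ) : ℤ) := by exact_mod_cast hhalf
          rw [Prod.ext_iff]
          constructor
          · simp only
            omega
          · simp only
            omega
        · have hmem : (g, y, x) ∈ Pp := by
            rw [hPp]; exact ⟨hg, hy, hxy, hgp, show g ^ x + g ^ y = d by omega⟩
          refine Or.inl (Or.inl (Or.inr ⟨(g, y, x), hmem, ?_⟩))
          rw [haeq, hbeq]
    · exact absurd haz ha0
    · rcases lt_trichotomy b 0 with hbn | hbz | hbp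
      · -- a > 0 > b impossible
        exfalso
        omega
      · exact absurd hbz hb0
      · -- 0 < a < b : g^y - g^x = d
        have haeq : a = ((g ^ x : ℕ) : ℤ) := by
          have h1 : (a.natAbs : ℤ) = ((g ^ x : ℕ) : ℤ) := by exact_mod_cast hAa
          omega
        have hbeq : b = ((g ^ y : ℕ) : ℤ) := by
          have h1 : (b.natAbs : ℤ) = ((g ^ y : ℕ) : ℤ) := by exact_mod_cast hBb
          omega
        have hnat : g ^ y = g ^ x + d := by
          have : ((g ^ y : ℕ) : ℤ) = ((g ^ x : ℕ) : ℤ) + (d : ℤ) := by omega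
          exact_mod_cast this
        have hxy : x < y := by
          rw [← Nat.pow_lt_pow_iff_right hgpow]
          omega
        have hmem : (g, x, y) ∈ Pm := by
          rw [hPm]; exact ⟨hg, hx, hxy, hgp, hnat⟩
        refine Or.inl (Or.inr ⟨(g, x, y), hmem, ?_⟩)
        rw [haeq, hbeq]
  -- cardinality bookkeeping
  have hAfin : A.Finite := by
    rw [hA]
    exact (((((Set.finite_singleton _).insert _).insert _).insert _).insert _)
  have hUfin : (A ∪ f1 '' Pp ∪ f2 '' Pp ∪ f3 '' Pm ∪ f4 '' Pm).Finite :=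
    ((((hAfin.union (hPpfin.image f1)).union (hPpfin.image f2)).union (hPmfin.image f3)).union
      (hPmfin.image f4))
  have hM : M (d : ℤ) ≤ (A ∪ f1 '' Pp ∪ f2 '' Pp ∪ f3 '' Pm ∪ f4 '' Pm).ncard :=
    Set.ncard_le_ncard cover hUfin
  have hAcard : A.ncard ≤ 5 := by
    rw [hA]
    refine le_trans (Set.ncard_insert_le _ _) ?_
    have h4 : ({((-1:ℤ), (d:ℤ)-1), (1-(d:ℤ), (1:ℤ)), (-1-(d:ℤ), (-1:ℤ)),
        (-(((d/2 : ℕ)) : ℤ), (((d/2 : ℕ)) : ℤ))} : Set (ℤ × ℤ)).ncard ≤ 4 := by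
      refine le_trans (Set.ncard_insert_le _ _) ?_
      have h3 : ({(1-(d:ℤ), (1:ℤ)), (-1-(d:ℤ), (-1:ℤ)),
          (-(((d/2 : ℕ)) : ℤ), (((d/2 : ℕ)) : ℤ))} : Set (ℤ × ℤ)).ncard ≤ 3 := by
        refine le_trans (Set.ncard_insert_le _ _) ?_
        have h2 : ({(-1-(d:ℤ), (-1:ℤ)),
            (-(((d/2 : ℕ)) : ℤ), (((d/2 : ℕ)) : ℤ))} : Set (ℤ × ℤ)).ncard ≤ 2 := by
          refine le_trans (Set.ncard_insert_le _ _) ?_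
          simp [Set.ncard_singleton]
        omega
      omega
    omega
  have hcard1 : (f1 '' Pp).ncard ≤ Nplus d := by
    have := Set.ncard_image_le (f := f1) hPpfin
    exact this
  have hcard2 : (f2 '' Pp).ncard ≤ Nplus d := Set.ncard_image_le (f := f2) hPpfin
  have hcard3 : (f3 '' Pm).ncard ≤ Nminus d := Set.ncard_image_le (f := f3) hPmfin
  have hcard4 : (f4 '' Pm).ncard ≤ Nminus d := Set.ncard_image_le (f := f4) hPmfin
  have hsplit : (A ∪ f1 '' Pp ∪ f2 '' Pp ∪ f3 '' Pm ∪ f4 '' Pm).ncard ≤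
      A.ncard + (f1 '' Pp).ncard + (f2 '' Pp).ncard + (f3 '' Pm).ncard + (f4 '' Pm).ncard := by
    refine le_trans (Set.ncard_union_le _ _) ?_
    refine Nat.add_le_add_right ?_ _
    refine le_trans (Set.ncard_union_le _ _) ?_
    refine Nat.add_le_add_right ?_ _
    refine le_trans (Set.ncard_union_le _ _) ?_
    refine Nat.add_le_add_right ?_ _
    exact Set.ncard_union_le _ _
  have hcnt := count_bound hd hm hm3
  have h8 : (8:ℕ) ≤ 2 ^ m := by
    calc (8:ℕ) = 2 ^ 3 := by norm_num
      _ ≤ 2 ^ m := Nat.pow_le_pow_right (by norm_num) hm3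
  have hpow : 2 ^ (m + 1) = 2 * 2 ^ m := by rw [pow_succ]; ring
  omega
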